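/- Let g_1, g_2 ∈ ℝ^p with ⟨g_1, g_2⟩ < ‖g_2‖² and ⟨g_1, g_2⟩ < ‖g_1‖². Define γ* = (‖g_2‖² − ⟨g_1, g_2⟩) / ‖g_1 − g_2‖² (well-defined since g_1 ≠ g_2 under the hypotheses) and d = γ* g_1 + (1 − γ*) g_2. Then γ* ∈ (0, 1), and ⟨d, g_1⟩ = ⟨d, g_2⟩ = ‖d‖² ≥ 0; in particular −d is a common descent direction: both directional derivatives ⟨−d, g_k⟩ ≤ 0, with strict inequality when d ≠ 0. -/

import Mathlib

/-- Two-task MGDA: the minimal-norm point of the segment between the two task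
gradients has equal inner products with both gradients, yielding a common descent
direction. -/
theorem stmt_8 (p : ℕ) (g₁ g₂ : EuclideanSpace ℝ (Fin p))
    (h₁ : inner g₁ g₂ (𝕜 := ℝ) < ‖g₂‖ ^ 2) (h₂ : inner g₁ g₂ (𝕜 := ℝ) < ‖g₁‖ ^ 2)
    (γ : ℝ) (hγ : γ = (‖g₂‖ ^ 2 - inner g₁ g₂ (𝕜 := ℝ)) / ‖g₁ - g₂‖ ^ 2)
    (d : EuclideanSpace ℝ (Fin p)) (hd : d = γ • g₁ + (1 - γ) • g₂) :
    (0 < γ ∧ γ < 1) ∧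
    inner d g₁ (𝕜 := ℝ) = ‖d‖ ^ 2 ∧ inner d g₂ (𝕜 := ℝ) = ‖d‖ ^ 2 ∧
    (0 : ℝ) ≤ ‖d‖ ^ 2 ∧
    inner (-d) g₁ (𝕜 := ℝ) ≤ 0 ∧ inner (-d) g₂ (𝕜 := ℝ) ≤ 0 ∧
    (d ≠ 0 → inner (-d) g₁ (𝕜 := ℝ) < 0 ∧ inner (-d) g₂ (𝕜 := ℝ) < 0) := by
  set A := ‖g₁‖ ^ 2 with hA
  set B := ‖g₂‖ ^ 2 with hB
  set c : ℝ := inner g₁ g₂ (𝕜 := ℝ) with hc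
  have hS : ‖g₁ - g₂‖ ^ 2 = A - 2 * c + B := by
    rw [hA, hB, hc, @norm_sub_sq_real]
  have hSpos : 0 < ‖g₁ - g₂‖ ^ 2 := by
    rw [hS]; nlinarith
  have hγpos : 0 < γ := by
    rw [hγ]; exact div_pos (by linarith) hSpos
  have hγlt : γ < 1 := by
    rw [hγ, div_lt_one hSpos, hS]; linarith
  have hdg1 : inner d g₁ (𝕜 := ℝ) = γ * A + (1 - γ) * c := by
    rw [hd, inner_add_left, real_inner_smul_left, real_inner_smul_left,
      real_inner_self_eq_norm_sq, ← real_inner_comm g₂ g₁, ← hA, ← hc]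
  have hdg2 : inner d g₂ (𝕜 := ℝ) = γ * c + (1 - γ) * B := by
    rw [hd, inner_add_left, real_inner_smul_left, real_inner_smul_left,
      real_inner_self_eq_norm_sq, ← hB, ← hc]
  have heq : inner d g₁ (𝕜 := ℝ) = inner d g₂ (𝕜 := ℝ) := by
    have hγS : γ * ‖g₁ - g₂‖ ^ 2 = B - c := by
      rw [hγ]; exact div_mul_cancel₀ _ hSpos.ne'
    have key : γ * (A - 2 * c + B) = B - c := by rw [← hS]; exact hγS
    rw [hdg1, hdg2]; linear_combination key
  have hdd : ‖d‖ ^ 2 = inner d g₁ (𝕜 := ℝ) := by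
    rw [← real_inner_self_eq_norm_sq]
    nth_rewrite 2 [hd]
    rw [inner_add_right, real_inner_smul_right, real_inner_smul_right, heq]
    ring
  have hnn : (0 : ℝ) ≤ ‖d‖ ^ 2 := sq_nonneg _
  refine ⟨⟨hγpos, hγlt⟩, hdd.symm, by rw [← heq, hdd], hnn, ?_, ?_, ?_⟩
  · rw [inner_neg_left, ← hdd]; linarith
  · rw [inner_neg_left, ← heq, ← hdd]; linarith
  · intro hne
    have hdn : 0 < ‖d‖ := norm_pos_iff.mpr hne
    have : 0 < ‖d‖ ^ 2 := by positivity
    constructor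
    · rw [inner_neg_left, ← hdd]; linarith
    · rw [inner_neg_left, ← heq, ← hdd]; linarith
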